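/- Let σ ∈ (0,1), N ≥ 2, and λ ≥ (2/σ − N)^{-1} with 2/σ − N > 0. For any u ∈ [0,1]^N, every coordinate of sparsemax(u/λ) lies in [0, 1/(Nσ)]. -/

import Mathlib

open Finset

/-- Threshold set for sparsemax: `j : Fin N` encodes support size `j+1`. -/
noncomputable def thresholdSet (N : ℕ) (w : Fin N → ℝ) (ρ : Equiv.Perm (Fin N)) : Finset (Fin N) :=
  Finset.univ.filter
    (fun j => (∑ i ∈ Finset.Iic j, w (ρ i)) < 2 * (N : ℝ) + ((j : ℝ) + 1) * w (ρ j))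

/-- Let `σ ∈ (0,1)`, `N ≥ 2`, `λ ≥ (2/σ − N)⁻¹` with `2/σ − N > 0`. For `u ∈ [0,1]^N`,
every coordinate of `sparsemax(u/λ)` lies in `[0, 1/(Nσ)]`. Here `sparsemax(v)_i =
max{0, v_i − κ*}/(2N)` with `κ* = (∑_{i=1}^k v_{ρ(i)} − 2N)/k` and `k` the sparsemax
support size of the sorted values `v ∘ ρ`. -/
theorem sparsemax_coord_le (N : ℕ) (hN : 2 ≤ N) (σ lam : ℝ) (hσ : σ ∈ Set.Ioo (0 : ℝ) 1)
    (hpos : 0 < 2 / σ - N) (hlam : (2 / σ - N)⁻¹ ≤ lam)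
    (u : Fin N → ℝ) (hu : ∀ i, u i ∈ Set.Icc (0 : ℝ) 1)
    (ρ : Equiv.Perm (Fin N)) (hsort : Antitone (fun i => u (ρ i) / lam))
    (hne : (thresholdSet N (fun i => u i / lam) ρ).Nonempty) :
    ∀ i : Fin N,
      (0 : ℝ) ≤ max 0 (u i / lam -
          ((∑ l ∈ Finset.Iic ((thresholdSet N (fun i => u i / lam) ρ).max' hne),
              u (ρ l) / lam) - 2 * N) /
            (((thresholdSet N (fun i => u i / lam) ρ).max' hne : ℝ) + 1)) / (2 * N) ∧
      max 0 (u i / lam -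
          ((∑ l ∈ Finset.Iic ((thresholdSet N (fun i => u i / lam) ρ).max' hne),
              u (ρ l) / lam) - 2 * N) /
            (((thresholdSet N (fun i => u i / lam) ρ).max' hne : ℝ) + 1)) / (2 * N)
        ≤ 1 / (N * σ) := by
  intro i
  have hσ0 : 0 < σ := hσ.1
  have hN0 : (0:ℝ) < N := by
    have : (0:ℕ) < N := by omega
    exact_mod_cast this
  have hN2 : (2:ℝ) ≤ N := by exact_mod_cast hN
  have hlam0 : 0 < lam := lt_of_lt_of_le (inv_pos.mpr hpos) hlam
  set j := (thresholdSet N (fun i => u i / lam) ρ).max' hne with hjdef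
  set S := ∑ l ∈ Finset.Iic j, u (ρ l) / lam with hSdef
  have hvnn : ∀ l : Fin N, 0 ≤ u l / lam := fun l => div_nonneg (hu l).1 hlam0.le
  have hvle : ∀ l : Fin N, u l / lam ≤ 2 / σ - N := by
    intro l
    have h1 : u l / lam ≤ 1 / lam := by
      gcongr
      exact (hu l).2
    have h2 : 1 / lam ≤ 2 / σ - N := by
      rw [one_div]
      have := inv_anti₀ (inv_pos.mpr hpos) hlam
      rwa [inv_inv] at this
    linarith
  have hS : 0 ≤ S := Finset.sum_nonneg fun l _ => hvnn (ρ l)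
  have hk : (0:ℝ) < (j:ℝ) + 1 := by positivity
  -- key bound: v i − κ ≤ 2/σ
  have key : u i / lam - (S - 2 * N) / ((j:ℝ) + 1) ≤ 2 / σ := by
    rcases lt_or_eq_of_le (Nat.succ_le_of_lt j.isLt) with hc | hc
    · -- j+1 < N : the successor index is not in the threshold set, so S ≥ 2N, κ ≥ 0
      set j' : Fin N := ⟨j.val + 1, hc⟩ with hj'
      have hnotmem : j' ∉ thresholdSet N (fun i => u i / lam) ρ := by
        intro hmem
        have hle := Finset.le_max' _ _ hmem
        rw [← hjdef] at hle
        have : (j:ℕ) < (j':ℕ) := by simp [hj']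
        exact absurd (lt_of_lt_of_le (Fin.lt_def.mpr this) hle) (lt_irrefl _)
      have hIic : Finset.Iic j' = insert j' (Finset.Iic j) := by
        ext x
        simp only [Finset.mem_Iic, Finset.mem_insert, Fin.le_def, Fin.ext_iff, hj']
        omega
      have hnotin : j' ∉ Finset.Iic j := by
        simp [Finset.mem_Iic, Fin.le_def, hj']
      have hsum : ∑ l ∈ Finset.Iic j', u (ρ l) / lam = u (ρ j') / lam + S := by
        rw [hIic, Finset.sum_insert hnotin]
      have hge : 2 * (N:ℝ) + ((j':ℝ) + 1) * (u (ρ j') / lam) ≤ ∑ l ∈ Finset.Iic j', u (ρ l) / lam := by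
        have h := hnotmem
        simp only [thresholdSet, Finset.mem_filter, Finset.mem_univ, true_and, not_lt] at h
        exact h
      have hj'cast : ((j':ℝ)) = (j:ℝ) + 1 := by
        simp [hj']
      rw [hsum, hj'cast] at hge
      have hmul : 0 ≤ ((j:ℝ) + 1) * (u (ρ j') / lam) := mul_nonneg hk.le (hvnn _)
      have hS2 : 2 * (N:ℝ) ≤ S := by nlinarith [hvnn (ρ j')]
      have hκ : 0 ≤ (S - 2 * N) / ((j:ℝ) + 1) := div_nonneg (by linarith) hk.le
      have := hvle i
      linarith
    · -- j+1 = N : κ ≥ −2 and N ≥ 2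
      have hjN : ((j:ℝ) + 1) = N := by
        have : (j:ℕ) + 1 = N := hc
        exact_mod_cast this
      have h1 : (-(2 * (N:ℝ))) / ((j:ℝ) + 1) ≤ (S - 2 * N) / ((j:ℝ) + 1) := by
        gcongr
        linarith
      have h2 : (-(2 * (N:ℝ))) / ((j:ℝ) + 1) = -2 := by
        rw [hjN]; field_simp
      have := hvle i
      rw [h2] at h1
      linarith
  have hmax : max 0 (u i / lam - (S - 2 * N) / ((j:ℝ) + 1)) ≤ 2 / σ :=
    max_le (by positivity) key
  constructor
  · apply div_nonneg (le_max_left _ _) (by positivity)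
  · rw [div_le_iff₀ (by positivity : (0:ℝ) < 2 * N)]
    have heq : 1 / ((N:ℝ) * σ) * (2 * N) = 2 / σ := by
      field_simp
    rw [heq]
    exact hmax
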